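/- The linear map ρ on the centrally extended gl(2|2) defined by ρ(E_{ij}) = E_{5−i,5−j} for 1 ≤ i,j ≤ 4, ρ(P)=K, ρ(K)=P, is a Lie superalgebra automorphism (preserves the super-bracket and the ℤ₂-grading), and satisfies ρ² = id. -/

import Mathlib

open Matrix BigOperators

/-- Carrier of the centrally extended `gl(2|2) ⊕ ℂP ⊕ ℂK` (matrix part, `P`-coefficient,
`K`-coefficient). -/
abbrev GlExt := (Matrix (Fin 4) (Fin 4) ℚ) × ℚ × ℚ

/-- The `ℤ₂`-grading on indices: `p(1)=p(2)=0`, `p(3)=p(4)=1` (here 0-based). -/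
def par (i : Fin 4) : ℕ := if (i : ℕ) < 2 then 0 else 1

/-- `ε`: nonzero only with `ε_{12} = -ε_{21} = 1` (0-based: `ε_{01} = -ε_{10} = 1`). -/
def eps (i j : Fin 4) : ℚ :=
  if i = 0 ∧ j = 1 then 1 else if i = 1 ∧ j = 0 then -1 else 0

/-- `ε̄`: nonzero only with `ε̄_{34} = -ε̄_{43} = 1` (0-based: `ε̄_{23} = -ε̄_{32} = 1`). -/
def epsBar (i j : Fin 4) : ℚ :=
  if i = 2 ∧ j = 3 then 1 else if i = 3 ∧ j = 2 then -1 else 0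

/-- The sign `(-1)^{(p(i)+p(j))(p(k)+p(l))}`. -/
def sgn (i j k l : Fin 4) : ℚ := (-1 : ℚ) ^ ((par i + par j) * (par k + par l))

/-- The bilinear extension of the bracket
`[E_{ij},E_{kl}] = δ_{kj}E_{il} − (−1)^{(p(i)+p(j))(p(k)+p(l))}δ_{il}E_{kj}
  + ε̄_{ik}ε_{jl}P + ε_{ik}ε̄_{jl}K`, with `P`, `K` central. -/
def br (u v : GlExt) : GlExt :=
  ( Matrix.of fun a b =>
      (∑ j, u.1 a j * v.1 j b) - ∑ i, sgn i b a i * v.1 a i * u.1 i b,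
    ∑ i, ∑ j, ∑ k, ∑ l, u.1 i j * v.1 k l * epsBar i k * eps j l,
    ∑ i, ∑ j, ∑ k, ∑ l, u.1 i j * v.1 k l * eps i k * epsBar j l )

/-- The basis element `E_{ij}` (0-based indices). -/
def Eb (i j : Fin 4) : GlExt := (Matrix.single i j 1, 0, 0)

/-- The central element `P`. -/
def Pc : GlExt := (0, 1, 0)

/-- The central element `K`. -/
def Kc : GlExt := (0, 0, 1)

/-- The map `ρ`: `E_{ij} ↦ E_{5−i,5−j}` (0-based: `i ↦ i.rev = 3−i`), `P ↦ K`, `K ↦ P`. -/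
def rho (u : GlExt) : GlExt :=
  (Matrix.of fun a b => u.1 a.rev b.rev, u.2.2, u.2.1)

lemma sgn_rev : ∀ i b a : Fin 4, sgn i b.rev a.rev i = sgn i.rev b a i.rev := by decide
lemma epsBar_rev : ∀ i k : Fin 4, epsBar i.rev k.rev = -eps i k := by decide
lemma eps_rev : ∀ i k : Fin 4, eps i.rev k.rev = -epsBar i k := by decide

lemma br_rho (u v : GlExt) : rho (br u v) = br (rho u) (rho v) := by
  unfold rho br
  refine Prod.ext ?_ (Prod.ext ?_ ?_)
  · ext a b
    simp only [Matrix.of_apply]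
    congr 1
    · exact Fintype.sum_bijective Fin.rev Fin.rev_bijective _ _
        fun j => by simp [Fin.rev_rev]
    · exact Fintype.sum_bijective Fin.rev Fin.rev_bijective _ _
        fun i => by simp [Fin.rev_rev, sgn_rev]
  · show (∑ i, ∑ j, ∑ k, ∑ l, u.1 i j * v.1 k l * eps i k * epsBar j l) = _
    simp only [Matrix.of_apply]
    refine Fintype.sum_bijective Fin.rev Fin.rev_bijective _ _ fun i => ?_
    refine Fintype.sum_bijective Fin.rev Fin.rev_bijective _ _ fun j => ?_
    refine Fintype.sum_bijective Fin.rev Fin.rev_bijective _ _ fun k => ?_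
    refine Fintype.sum_bijective Fin.rev Fin.rev_bijective _ _ fun l => ?_
    simp only [Fin.rev_rev, epsBar_rev, eps_rev]
    ring
  · show (∑ i, ∑ j, ∑ k, ∑ l, u.1 i j * v.1 k l * epsBar i k * eps j l) = _
    simp only [Matrix.of_apply]
    refine Fintype.sum_bijective Fin.rev Fin.rev_bijective _ _ fun i => ?_
    refine Fintype.sum_bijective Fin.rev Fin.rev_bijective _ _ fun j => ?_
    refine Fintype.sum_bijective Fin.rev Fin.rev_bijective _ _ fun k => ?_
    refine Fintype.sum_bijective Fin.rev Fin.rev_bijective _ _ fun l => ?_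
    simp only [Fin.rev_rev, epsBar_rev, eps_rev]
    ring

/-- `ρ` is a Lie superalgebra automorphism of the centrally extended `gl(2|2)`:
it is linear, preserves the super-bracket and the `ℤ₂`-grading, maps `E_{ij}` to
`E_{5−i,5−j}`, swaps `P` and `K`, and satisfies `ρ² = id`. -/
theorem rho_automorphism :
    (∀ u v : GlExt, rho (u + v) = rho u + rho v)
    ∧ (∀ (c : ℚ) (u : GlExt), rho (c • u) = c • rho u)
    ∧ (∀ u v : GlExt, rho (br u v) = br (rho u) (rho v))
    ∧ (∀ u : GlExt, rho (rho u) = u)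
    ∧ (∀ i j : Fin 4, (par i.rev + par j.rev) % 2 = (par i + par j) % 2)
    ∧ (∀ i j : Fin 4, rho (Eb i j) = Eb i.rev j.rev)
    ∧ rho Pc = Kc ∧ rho Kc = Pc := by
  refine ⟨fun u v => rfl, fun c u => rfl, br_rho, fun u => ?_, by decide, fun i j => ?_, rfl, rfl⟩
  · refine Prod.ext ?_ rfl
    ext a b
    simp [rho, Fin.rev_rev]
  · refine Prod.ext ?_ rfl
    ext a b
    simp only [rho, Eb, Matrix.of_apply, Matrix.single]
    congr 1
    rw [eq_iff_iff]
    constructor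
    · rintro ⟨rfl, rfl⟩; simp
    · rintro ⟨h1, h2⟩
      exact ⟨by rw [← h1, Fin.rev_rev], by rw [← h2, Fin.rev_rev]⟩
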